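/- Let δ > 0, C > 0, let σ be a real m×n matrix with σσᵀ ≥ δ·I_m and |σ| ≤ C, μ ∈ ℝ^m with |μ| ≤ C, and Π ⊆ ℝ^m a nonempty closed convex cone. Define, for P ∈ ℝ, Λ ∈ ℝⁿ and k > 0, F₁(v,P,Λ) := P·|σᵀv|² + 2vᵀ(Pμ+σΛ), F₁*(P,Λ) := inf_{v∈Π} F₁(v,P,Λ) and F₁^{*,k}(P,Λ) := inf_{v∈Π, |v|≤k} F₁(v,P,Λ). Let 0 < ϑ ≤ M, let (P^k) be a sequence in [ϑ,M] with P^k → P, and let Λ^k → Λ in ℝⁿ. Then lim_{k→∞} F₁^{*,k}(P^k,Λ^k) = F₁*(P,Λ). -/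

import Mathlib

open Matrix Set Filter

/-- Euclidean norm of a vector, written via the dot product. -/
noncomputable def vecNorm {m : ℕ} (v : Fin m → ℝ) : ℝ := Real.sqrt (v ⬝ᵥ v)

/-- `F₁(v,P,Λ) := P·|σᵀv|² + 2vᵀ(Pμ+σΛ)`. -/
noncomputable def F1 {m n : ℕ} (σ : Matrix (Fin m) (Fin n) ℝ) (μ : Fin m → ℝ)
    (Λ : Fin n → ℝ) (P : ℝ) (v : Fin m → ℝ) : ℝ :=
  P * ((σᵀ *ᵥ v) ⬝ᵥ (σᵀ *ᵥ v)) + 2 * (v ⬝ᵥ (P • μ + σ *ᵥ Λ))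

section helpers

lemma dot_self_nonneg' {m : ℕ} (v : Fin m → ℝ) : 0 ≤ v ⬝ᵥ v :=
  Finset.sum_nonneg fun i _ => mul_self_nonneg (v i)

lemma vecNorm_nonneg' {m : ℕ} (v : Fin m → ℝ) : 0 ≤ vecNorm v := Real.sqrt_nonneg _

lemma vecNorm_sq {m : ℕ} (v : Fin m → ℝ) : vecNorm v ^ 2 = v ⬝ᵥ v :=
  Real.sq_sqrt (dot_self_nonneg' v)

lemma vecNorm_zero' {m : ℕ} : vecNorm (0 : Fin m → ℝ) = 0 := by
  simp [vecNorm]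

lemma abs_dot_le {m : ℕ} (v w : Fin m → ℝ) : |v ⬝ᵥ w| ≤ vecNorm v * vecNorm w := by
  have h2 : (v ⬝ᵥ w) ^ 2 ≤ (v ⬝ᵥ v) * (w ⬝ᵥ w) := by
    simpa [dotProduct, pow_two] using
      Finset.sum_mul_sq_le_sq_mul_sq Finset.univ v w
  have := Real.sqrt_le_sqrt h2
  rw [Real.sqrt_sq_eq_abs, Real.sqrt_mul (dot_self_nonneg' v)] at this
  exact this

lemma vecNorm_smul' {m : ℕ} (c : ℝ) (v : Fin m → ℝ) :
    vecNorm (c • v) = |c| * vecNorm v := by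
  have h : (c • v) ⬝ᵥ (c • v) = c ^ 2 * (v ⬝ᵥ v) := by
    simp only [dotProduct, Pi.smul_apply, smul_eq_mul, Finset.mul_sum]
    exact Finset.sum_congr rfl fun i _ => by ring
  unfold vecNorm
  rw [h, show c ^ 2 = |c| ^ 2 from (sq_abs c).symm,
    Real.sqrt_mul (by positivity), Real.sqrt_sq (abs_nonneg c)]

lemma vecNorm_add_le' {m : ℕ} (v w : Fin m → ℝ) :
    vecNorm (v + w) ≤ vecNorm v + vecNorm w := by
  have hcs : |v ⬝ᵥ w| ≤ vecNorm v * vecNorm w := abs_dot_le v w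
  have hvw : v ⬝ᵥ w ≤ vecNorm v * vecNorm w := (le_abs_self _).trans hcs
  have hexp : (v + w) ⬝ᵥ (v + w) = v ⬝ᵥ v + 2 * (v ⬝ᵥ w) + w ⬝ᵥ w := by
    simp only [dotProduct, Pi.add_apply]
    rw [Finset.mul_sum, ← Finset.sum_add_distrib, ← Finset.sum_add_distrib]
    exact Finset.sum_congr rfl fun i _ => by ring
  have h1 : (v + w) ⬝ᵥ (v + w) ≤ (vecNorm v + vecNorm w) ^ 2 := by
    have hv := vecNorm_sq v
    have hw := vecNorm_sq w
    nlinarith [vecNorm_nonneg' v, vecNorm_nonneg' w]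
  have h2 := Real.sqrt_le_sqrt h1
  rwa [Real.sqrt_sq (by have := vecNorm_nonneg' v; have := vecNorm_nonneg' w; linarith)] at h2

lemma vecNorm_mulVec_le {a b : ℕ} (A : Matrix (Fin a) (Fin b) ℝ) (x : Fin b → ℝ) :
    vecNorm (A *ᵥ x) ≤ Real.sqrt (∑ i, ∑ j, A i j ^ 2) * vecNorm x := by
  have key : (A *ᵥ x) ⬝ᵥ (A *ᵥ x) ≤ (∑ i, ∑ j, A i j ^ 2) * (x ⬝ᵥ x) := by
    have h1 : ∀ i, (A *ᵥ x) i * (A *ᵥ x) i ≤ (∑ j, A i j ^ 2) * (x ⬝ᵥ x) := by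
      intro i
      simpa [Matrix.mulVec, dotProduct, pow_two] using
        Finset.sum_mul_sq_le_sq_mul_sq Finset.univ (A i) x
    calc (A *ᵥ x) ⬝ᵥ (A *ᵥ x) = ∑ i, ((A *ᵥ x) i * (A *ᵥ x) i) := rfl
      _ ≤ ∑ i, (∑ j, A i j ^ 2) * (x ⬝ᵥ x) := Finset.sum_le_sum fun i _ => h1 i
      _ = (∑ i, ∑ j, A i j ^ 2) * (x ⬝ᵥ x) := by rw [Finset.sum_mul]
  have := Real.sqrt_le_sqrt key
  rw [Real.sqrt_mul (by positivity)] at this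
  exact this

/-- Reduce an infimum over `S` to an infimum over `S ∩ T` when `F` is nonnegative
outside of `T`. -/
lemma sInf_reduce {α : Type*} (F : α → ℝ) (S : Set α) (x0 : α) (hx0 : x0 ∈ S)
    (hF0 : F x0 ≤ 0) (T : Set α) (hx0T : x0 ∈ T) (hbdd : BddBelow (F '' S))
    (hout : ∀ v ∈ S, v ∉ T → 0 ≤ F v) :
    sInf (F '' S) = sInf (F '' (S ∩ T)) := by
  have hsub : F '' (S ∩ T) ⊆ F '' S := Set.image_mono Set.inter_subset_left
  apply le_antisymm
  · exact csInf_le_csInf hbdd ((Set.Nonempty.image F ⟨x0, hx0, hx0T⟩)) hsub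
  · apply le_csInf (Set.Nonempty.image F ⟨x0, hx0⟩)
    rintro y ⟨v, hv, rfl⟩
    by_cases hT : v ∈ T
    · exact csInf_le (hbdd.mono hsub) ⟨v, ⟨hv, hT⟩, rfl⟩
    · have h1 : sInf (F '' (S ∩ T)) ≤ F x0 :=
        csInf_le (hbdd.mono hsub) ⟨x0, ⟨hx0, hx0T⟩, rfl⟩
      have h2 := hout v hv hT
      linarith

lemma sInf_le_sInf_add {α : Type*} (F G : α → ℝ) (S : Set α) (hS : S.Nonempty)
    (hbF : BddBelow (F '' S)) {ε : ℝ} (h : ∀ v ∈ S, F v ≤ G v + ε) :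
    sInf (F '' S) ≤ sInf (G '' S) + ε := by
  have h1 : sInf (F '' S) - ε ≤ sInf (G '' S) := by
    apply le_csInf (hS.image G)
    rintro y ⟨v, hv, rfl⟩
    have h2 : sInf (F '' S) ≤ F v := csInf_le hbF ⟨v, hv, rfl⟩
    have h3 := h v hv
    linarith
  linarith

lemma sInf_diff_le {α : Type*} (F G : α → ℝ) (S : Set α) (hS : S.Nonempty)
    (hbF : BddBelow (F '' S)) (hbG : BddBelow (G '' S)) {ε : ℝ}
    (h : ∀ v ∈ S, |F v - G v| ≤ ε) :
    |sInf (F '' S) - sInf (G '' S)| ≤ ε := by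
  have h1 := sInf_le_sInf_add F G S hS hbF fun v hv => by
    have := (abs_le.1 (h v hv)).2; linarith
  have h2 := sInf_le_sInf_add G F S hS hbG fun v hv => by
    have := (abs_le.1 (h v hv)).1; linarith
  rw [abs_le]; constructor <;> linarith

end helpers

set_option maxHeartbeats 2000000

/-- if `σσᵀ ≥ δI`, `|σ| ≤ C`, `|μ| ≤ C`, `K` is a nonempty closed convex
cone, `(P^k) ⊆ [ϑ,M]` with `P^k → P` and `Λ^k → Λ`, then the truncated infima
`F₁^{*,k}(P^k,Λ^k) := inf_{v∈K, |v|≤k} F₁(v,P^k,Λ^k)` converge to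
`F₁*(P,Λ) := inf_{v∈K} F₁(v,P,Λ)`. -/
theorem stmt19 {m n : ℕ} (δ C : ℝ) (hδ : 0 < δ) (hC : 0 < C)
    (σ : Matrix (Fin m) (Fin n) ℝ)
    (hpsd : (σ * σᵀ - δ • (1 : Matrix (Fin m) (Fin m) ℝ)).PosSemidef)
    (hσC : Real.sqrt (∑ i, ∑ j, σ i j ^ 2) ≤ C)
    (μ : Fin m → ℝ) (hμC : vecNorm μ ≤ C)
    (K : Set (Fin m → ℝ)) (hne : K.Nonempty) (hcl : IsClosed K) (hcv : Convex ℝ K)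
    (hcone : ∀ v ∈ K, ∀ c : ℝ, 0 ≤ c → c • v ∈ K) (h0 : (0 : Fin m → ℝ) ∈ K)
    (ϑ M : ℝ) (hϑ : 0 < ϑ) (hϑM : ϑ ≤ M)
    (Pk : ℕ → ℝ) (hPk : ∀ k, Pk k ∈ Set.Icc ϑ M)
    (Λk : ℕ → Fin n → ℝ) (P : ℝ) (Λ : Fin n → ℝ)
    (hPlim : Tendsto Pk atTop (nhds P))
    (hΛlim : Tendsto Λk atTop (nhds Λ)) :
    Tendsto (fun k : ℕ =>
        sInf (F1 σ μ (Λk k) (Pk k) '' (K ∩ {v | vecNorm v ≤ (k : ℝ)})))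
      atTop (nhds (sInf (F1 σ μ Λ P '' K))) := by
  -- basic constants
  have ha : (0 : ℝ) < ϑ * δ := mul_pos hϑ hδ
  set a : ℝ := ϑ * δ with ha_def
  have hPmem : P ∈ Set.Icc ϑ M :=
    ⟨ge_of_tendsto' hPlim fun k => (hPk k).1, le_of_tendsto' hPlim fun k => (hPk k).2⟩
  set ΛB : ℝ := vecNorm Λ + 1 with hΛB_def
  have hΛB1 : (1 : ℝ) ≤ ΛB := by have := vecNorm_nonneg' Λ; simp [hΛB_def]; linarith
  set B : ℝ := M * C + C * ΛB with hB_def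
  have hB : 0 < B := by nlinarith
  set R : ℝ := 2 * B / a with hR_def
  have hRpos : 0 < R := by positivity
  set L : ℝ := -(B ^ 2 / a) with hL_def
  -- operator-norm style bounds
  have hσCnn : 0 ≤ Real.sqrt (∑ i, ∑ j, σ i j ^ 2) := Real.sqrt_nonneg _
  have hσv : ∀ v : Fin m → ℝ, vecNorm (σᵀ *ᵥ v) ≤ C * vecNorm v := by
    intro v
    have h1 := vecNorm_mulVec_le σᵀ v
    have h2 : (∑ j, ∑ i, σᵀ j i ^ 2) = ∑ i, ∑ j, σ i j ^ 2 := by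
      rw [Finset.sum_comm]; simp [Matrix.transpose_apply]
    rw [h2] at h1
    exact h1.trans (mul_le_mul_of_nonneg_right hσC (vecNorm_nonneg' v))
  have hσΛ : ∀ y : Fin n → ℝ, vecNorm (σ *ᵥ y) ≤ C * vecNorm y := fun y =>
    (vecNorm_mulVec_le σ y).trans (mul_le_mul_of_nonneg_right hσC (vecNorm_nonneg' y))
  -- the coercivity estimate from positive semidefiniteness
  have hquad : ∀ v : Fin m → ℝ, δ * (v ⬝ᵥ v) ≤ (σᵀ *ᵥ v) ⬝ᵥ (σᵀ *ᵥ v) := by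
    intro v
    have h := hpsd.dotProduct_mulVec_nonneg v
    simp only [star_trivial] at h
    rw [Matrix.sub_mulVec, Matrix.smul_mulVec, Matrix.one_mulVec,
      ← Matrix.mulVec_mulVec, dotProduct_sub, Matrix.dotProduct_mulVec v σ,
      ← Matrix.mulVec_transpose] at h
    simp only [dotProduct_smul, smul_eq_mul] at h
    linarith
  -- bound on the linear coefficient
  have hble : ∀ (P' : ℝ) (Λ' : Fin n → ℝ), ϑ ≤ P' → P' ≤ M → vecNorm Λ' ≤ ΛB →
      vecNorm (P' • μ + σ *ᵥ Λ') ≤ B := by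
    intro P' Λ' h1 h2 h3
    have t1 : vecNorm (P' • μ) ≤ M * C := by
      rw [vecNorm_smul']
      have hP'abs : |P'| ≤ M := by rw [abs_le]; constructor <;> linarith
      have := mul_le_mul hP'abs hμC (vecNorm_nonneg' μ) (by linarith)
      linarith
    have t2 : vecNorm (σ *ᵥ Λ') ≤ C * ΛB :=
      (hσΛ Λ').trans (mul_le_mul_of_nonneg_left h3 hC.le)
    have := vecNorm_add_le' (P' • μ) (σ *ᵥ Λ')
    rw [hB_def]; linarith
  -- lower quadratic bound on F1
  have hlow : ∀ (P' : ℝ) (Λ' : Fin n → ℝ) (v : Fin m → ℝ), ϑ ≤ P' →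
      a * vecNorm v ^ 2 - 2 * vecNorm (P' • μ + σ *ᵥ Λ') * vecNorm v ≤ F1 σ μ Λ' P' v := by
    intro P' Λ' v hP'
    have h1 := hquad v
    have h2 := abs_dot_le v (P' • μ + σ *ᵥ Λ')
    have h3 := (abs_le.1 h2).1
    have hQ0 : 0 ≤ (σᵀ *ᵥ v) ⬝ᵥ (σᵀ *ᵥ v) := dot_self_nonneg' _
    have hsq := vecNorm_sq v
    have e1 : ϑ * (δ * (v ⬝ᵥ v)) ≤ ϑ * ((σᵀ *ᵥ v) ⬝ᵥ (σᵀ *ᵥ v)) :=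
      mul_le_mul_of_nonneg_left h1 hϑ.le
    have e2 : 0 ≤ (P' - ϑ) * ((σᵀ *ᵥ v) ⬝ᵥ (σᵀ *ᵥ v)) :=
      mul_nonneg (by linarith) hQ0
    unfold F1
    nlinarith [vecNorm_nonneg' v]
  -- uniform lower bound (boundedness below)
  have hLB : ∀ (P' : ℝ) (Λ' : Fin n → ℝ), ϑ ≤ P' →
      vecNorm (P' • μ + σ *ᵥ Λ') ≤ B → ∀ v : Fin m → ℝ, L ≤ F1 σ μ Λ' P' v := by
    intro P' Λ' hP' hwB v
    have h1 := hlow P' Λ' v hP'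
    have ht0 := vecNorm_nonneg' v
    have hdiv : B ^ 2 / a * a = B ^ 2 := div_mul_cancel₀ _ ha.ne'
    rw [hL_def]
    nlinarith [sq_nonneg (a * vecNorm v - B),
      mul_le_mul_of_nonneg_right hwB ht0]
  -- nonnegativity outside the ball of radius R
  have hout : ∀ (P' : ℝ) (Λ' : Fin n → ℝ), ϑ ≤ P' →
      vecNorm (P' • μ + σ *ᵥ Λ') ≤ B → ∀ v : Fin m → ℝ, R ≤ vecNorm v →
      0 ≤ F1 σ μ Λ' P' v := by
    intro P' Λ' hP' hwB v hRv
    have h1 := hlow P' Λ' v hP'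
    have ht0 := vecNorm_nonneg' v
    have hdiv : 2 * B / a * a = 2 * B := div_mul_cancel₀ _ ha.ne'
    have hat : 2 * B ≤ a * vecNorm v := by
      have := mul_le_mul_of_nonneg_right hRv ha.le
      rw [hR_def] at this
      nlinarith
    nlinarith [mul_le_mul_of_nonneg_right hwB ht0,
      mul_le_mul_of_nonneg_right hat ht0]
  -- F1 at zero
  have hF10 : ∀ (P' : ℝ) (Λ' : Fin n → ℝ), F1 σ μ Λ' P' 0 = 0 := by
    intro P' Λ'; simp [F1]
  -- pointwise difference bound on the ball of radius R
  have hdiff : ∀ (P' : ℝ) (Λ' : Fin n → ℝ) (v : Fin m → ℝ), vecNorm v ≤ R →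
      |F1 σ μ Λ' P' v - F1 σ μ Λ P v| ≤
        |P' - P| * (C ^ 2 * R ^ 2 + 2 * R * C) + 2 * R * C * vecNorm (Λ' - Λ) := by
    intro P' Λ' v hv
    have ht0 := vecNorm_nonneg' v
    have hQ0 : 0 ≤ (σᵀ *ᵥ v) ⬝ᵥ (σᵀ *ᵥ v) := dot_self_nonneg' _
    have hid : F1 σ μ Λ' P' v - F1 σ μ Λ P v
        = (P' - P) * ((σᵀ *ᵥ v) ⬝ᵥ (σᵀ *ᵥ v))
          + 2 * (v ⬝ᵥ ((P' - P) • μ + σ *ᵥ (Λ' - Λ))) := by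
      simp only [F1, dotProduct_add, Matrix.mulVec_sub, dotProduct_sub, sub_smul,
        dotProduct_smul, smul_eq_mul]
      ring
    have hQle : (σᵀ *ᵥ v) ⬝ᵥ (σᵀ *ᵥ v) ≤ C ^ 2 * R ^ 2 := by
      have h1 := hσv v
      have h2 := vecNorm_sq (σᵀ *ᵥ v)
      have h3 : vecNorm (σᵀ *ᵥ v) * vecNorm (σᵀ *ᵥ v) ≤ (C * vecNorm v) * (C * vecNorm v) :=
        mul_le_mul h1 h1 (vecNorm_nonneg' _) (mul_nonneg hC.le ht0)
      have h5 : C * vecNorm v ≤ C * R := mul_le_mul_of_nonneg_left hv hC.le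
      have h4 : (C * vecNorm v) * (C * vecNorm v) ≤ (C * R) * (C * R) :=
        mul_le_mul h5 h5 (mul_nonneg hC.le ht0) (mul_nonneg hC.le hRpos.le)
      nlinarith [h2, h3, h4]
    have hw : vecNorm ((P' - P) • μ + σ *ᵥ (Λ' - Λ)) ≤
        |P' - P| * C + C * vecNorm (Λ' - Λ) := by
      have t1 : vecNorm ((P' - P) • μ) ≤ |P' - P| * C := by
        rw [vecNorm_smul']
        exact mul_le_mul_of_nonneg_left hμC (abs_nonneg _)
      have t2 := (hσΛ (Λ' - Λ))
      have := vecNorm_add_le' ((P' - P) • μ) (σ *ᵥ (Λ' - Λ))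
      linarith
    have hdot : |v ⬝ᵥ ((P' - P) • μ + σ *ᵥ (Λ' - Λ))| ≤
        vecNorm v * (|P' - P| * C + C * vecNorm (Λ' - Λ)) :=
      (abs_dot_le _ _).trans (mul_le_mul_of_nonneg_left hw ht0)
    have hrhs : vecNorm v * (|P' - P| * C + C * vecNorm (Λ' - Λ)) ≤
        R * (|P' - P| * C + C * vecNorm (Λ' - Λ)) := by
      exact mul_le_mul_of_nonneg_right hv
        (add_nonneg (mul_nonneg (abs_nonneg _) hC.le)
          (mul_nonneg hC.le (vecNorm_nonneg' _)))
    calc |F1 σ μ Λ' P' v - F1 σ μ Λ P v|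
        ≤ |(P' - P) * ((σᵀ *ᵥ v) ⬝ᵥ (σᵀ *ᵥ v))|
          + |2 * (v ⬝ᵥ ((P' - P) • μ + σ *ᵥ (Λ' - Λ)))| := by
          rw [hid]; exact abs_add_le _ _
      _ = |P' - P| * ((σᵀ *ᵥ v) ⬝ᵥ (σᵀ *ᵥ v))
          + 2 * |v ⬝ᵥ ((P' - P) • μ + σ *ᵥ (Λ' - Λ))| := by
          rw [abs_mul, abs_of_nonneg hQ0, abs_mul]
          norm_num
      _ ≤ |P' - P| * (C ^ 2 * R ^ 2)
          + 2 * (R * (|P' - P| * C + C * vecNorm (Λ' - Λ))) := by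
          have := mul_le_mul_of_nonneg_left hQle (abs_nonneg (P' - P))
          linarith
      _ = |P' - P| * (C ^ 2 * R ^ 2 + 2 * R * C) + 2 * R * C * vecNorm (Λ' - Λ) := by
          ring
  -- continuity of vecNorm
  have hvc : Continuous fun v : Fin n → ℝ => vecNorm v := by
    simp only [vecNorm, dotProduct]
    exact Real.continuous_sqrt.comp
      (continuous_finset_sum _ fun i _ => (continuous_apply i).mul (continuous_apply i))
  have hΛd : Tendsto (fun k => vecNorm (Λk k - Λ)) atTop (nhds 0) := by
    have h1 : Tendsto (fun k => Λk k - Λ) atTop (nhds (Λ - Λ)) :=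
      hΛlim.sub tendsto_const_nhds
    rw [sub_self] at h1
    have := (hvc.tendsto 0).comp h1
    simpa [vecNorm_zero', Function.comp_def] using this
  have hPd : Tendsto (fun k => |Pk k - P|) atTop (nhds 0) := by
    have h1 : Tendsto (fun k => Pk k - P) atTop (nhds (P - P)) :=
      hPlim.sub tendsto_const_nhds
    rw [sub_self] at h1
    simpa using h1.abs
  -- main ε-argument
  rw [Metric.tendsto_atTop]
  intro ε hε
  have hD : Tendsto
      (fun k => |Pk k - P| * (C ^ 2 * R ^ 2 + 2 * R * C) + 2 * R * C * vecNorm (Λk k - Λ))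
      atTop (nhds 0) := by
    have := (hPd.mul_const (C ^ 2 * R ^ 2 + 2 * R * C)).add (hΛd.const_mul (2 * R * C))
    simpa using this
  have evD : ∀ᶠ k in atTop,
      |Pk k - P| * (C ^ 2 * R ^ 2 + 2 * R * C) + 2 * R * C * vecNorm (Λk k - Λ) < ε :=
    hD.eventually_lt_const hε
  have evΛ : ∀ᶠ k in atTop, vecNorm (Λk k - Λ) ≤ 1 := by
    have : ∀ᶠ k in atTop, vecNorm (Λk k - Λ) < 1 := hΛd.eventually_lt_const one_pos
    exact this.mono fun k hk => hk.le
  have evk : ∀ᶠ k : ℕ in atTop, R ≤ (k : ℝ) :=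
    eventually_atTop.2 ⟨⌈R⌉₊, fun k hk => (Nat.le_ceil R).trans (Nat.cast_le.2 hk)⟩
  have hev := (evΛ.and (evD.and evk))
  rw [eventually_atTop] at hev
  obtain ⟨N, hN⟩ := hev
  refine ⟨N, fun k hk => ?_⟩
  obtain ⟨hΛ1, hDk, hRk⟩ := hN k hk
  -- bounds for the k-th data
  have hP'1 : ϑ ≤ Pk k := (hPk k).1
  have hP'2 : Pk k ≤ M := (hPk k).2
  have hΛ'B : vecNorm (Λk k) ≤ ΛB := by
    have h1 : vecNorm (Λk k) ≤ vecNorm (Λk k - Λ) + vecNorm Λ := by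
      have := vecNorm_add_le' (Λk k - Λ) Λ
      rwa [sub_add_cancel] at this
    rw [hΛB_def]; linarith
  have hΛselfB : vecNorm Λ ≤ ΛB := by rw [hΛB_def]; linarith
  have hwB' : vecNorm (Pk k • μ + σ *ᵥ Λk k) ≤ B := hble _ _ hP'1 hP'2 hΛ'B
  have hwB : vecNorm (P • μ + σ *ᵥ Λ) ≤ B := hble _ _ hPmem.1 hPmem.2 hΛselfB
  -- boundedness below
  have hbdd1 : BddBelow (F1 σ μ Λ P '' K) := by
    refine ⟨L, ?_⟩; rintro y ⟨v, hv, rfl⟩; exact hLB P Λ hPmem.1 hwB v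
  have hbdd2 : BddBelow (F1 σ μ (Λk k) (Pk k) '' (K ∩ {v | vecNorm v ≤ (k : ℝ)})) := by
    refine ⟨L, ?_⟩; rintro y ⟨v, hv, rfl⟩; exact hLB _ _ hP'1 hwB' v
  have hbdd3 : BddBelow (F1 σ μ (Λk k) (Pk k) '' (K ∩ {v | vecNorm v ≤ R})) := by
    refine ⟨L, ?_⟩; rintro y ⟨v, hv, rfl⟩; exact hLB _ _ hP'1 hwB' v
  have hbdd4 : BddBelow (F1 σ μ Λ P '' (K ∩ {v | vecNorm v ≤ R})) :=
    hbdd1.mono (Set.image_mono Set.inter_subset_left)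
  -- step A : reduce the limit infimum to the ball of radius R
  have hA : sInf (F1 σ μ Λ P '' K) = sInf (F1 σ μ Λ P '' (K ∩ {v | vecNorm v ≤ R})) := by
    apply sInf_reduce _ _ 0 h0 (le_of_eq (hF10 P Λ)) _ _ hbdd1
    · intro v hv hvT
      exact hout P Λ hPmem.1 hwB v (le_of_not_ge fun h => hvT h)
    · show vecNorm (0 : Fin m → ℝ) ≤ R
      rw [vecNorm_zero']; exact hRpos.le
  -- step B : reduce the k-th infimum to the ball of radius R
  have hB1 : sInf (F1 σ μ (Λk k) (Pk k) '' (K ∩ {v | vecNorm v ≤ (k : ℝ)}))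
      = sInf (F1 σ μ (Λk k) (Pk k) ''
          ((K ∩ {v | vecNorm v ≤ (k : ℝ)}) ∩ {v | vecNorm v ≤ R})) := by
    apply sInf_reduce _ _ 0 _ (le_of_eq (hF10 _ _)) _ _ hbdd2
    · intro v hv hvT
      exact hout _ _ hP'1 hwB' v (le_of_not_ge fun h => hvT h)
    · exact ⟨h0, by rw [Set.mem_setOf_eq, vecNorm_zero']; exact Nat.cast_nonneg k⟩
    · show vecNorm (0 : Fin m → ℝ) ≤ R
      rw [vecNorm_zero']; exact hRpos.le
  have hsets : (K ∩ {v | vecNorm v ≤ (k : ℝ)}) ∩ {v | vecNorm v ≤ R}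
      = K ∩ {v | vecNorm v ≤ R} := by
    ext v
    simp only [Set.mem_inter_iff, Set.mem_setOf_eq]
    constructor
    · rintro ⟨⟨h1, _⟩, h3⟩; exact ⟨h1, h3⟩
    · rintro ⟨h1, h3⟩; exact ⟨⟨h1, h3.trans hRk⟩, h3⟩
  -- step C : compare the two infima over the ball
  have hSne : (K ∩ {v | vecNorm v ≤ R}).Nonempty :=
    ⟨0, h0, by rw [Set.mem_setOf_eq, vecNorm_zero']; exact hRpos.le⟩
  have hC1 : |sInf (F1 σ μ (Λk k) (Pk k) '' (K ∩ {v | vecNorm v ≤ R}))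
      - sInf (F1 σ μ Λ P '' (K ∩ {v | vecNorm v ≤ R}))| ≤
      |Pk k - P| * (C ^ 2 * R ^ 2 + 2 * R * C) + 2 * R * C * vecNorm (Λk k - Λ) :=
    sInf_diff_le _ _ _ hSne hbdd3 hbdd4 fun v hv => hdiff _ _ v hv.2
  rw [Real.dist_eq, hA, hB1, hsets]
  calc |sInf (F1 σ μ (Λk k) (Pk k) '' (K ∩ {v | vecNorm v ≤ R}))
      - sInf (F1 σ μ Λ P '' (K ∩ {v | vecNorm v ≤ R}))|
      ≤ |Pk k - P| * (C ^ 2 * R ^ 2 + 2 * R * C) + 2 * R * C * vecNorm (Λk k - Λ) := hC1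
    _ < ε := hDk
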